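/- Let z ∈ ℂ with z ≠ 0, let E ∈ ℂ, and let u = (u_1,…,u_n) ∈ (ℂ^m)^n be a nonzero vector satisfying H(z)·u = E·u. Then the vector w = (u_1, z⁻¹·u_n) ∈ ℂ^{2m} is nonzero and satisfies T(E)·w = z·w; in particular z is an eigenvalue of T(E). -/

import Mathlib

open Matrix

noncomputable def tstep {m : ℕ} (A B C : Matrix (Fin m) (Fin m) ℂ) (E : ℂ) :
    Matrix (Fin m ⊕ Fin m) (Fin m ⊕ Fin m) ℂ :=
  Matrix.fromBlocks (B⁻¹ * (E • 1 - A)) (-(B⁻¹ * C)) 1 0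

/-- The transfer matrix `T(E) = t_n(E) ⋯ t_1(E)` (0-indexed: `t_{n-1} ⋯ t_0`). -/
noncomputable def transfer {n m : ℕ} (A B C : Fin n → Matrix (Fin m) (Fin m) ℂ) (E : ℂ) :
    Matrix (Fin m ⊕ Fin m) (Fin m ⊕ Fin m) ℂ :=
  ((List.ofFn fun k : Fin n => tstep (A k) (B k) (C k) E).reverse).prod

/-- The block matrix `H(z)` with Bloch-type boundary conditions:
diagonal blocks `A_k`, upper blocks `B_k`, lower blocks `C_k`,
corner blocks `z⁻¹ C_1` (top-right) and `z B_n` (bottom-left). -/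
noncomputable def Hmat {n m : ℕ} (A B C : Fin n → Matrix (Fin m) (Fin m) ℂ) (z : ℂ) :
    Matrix (Fin n × Fin m) (Fin n × Fin m) ℂ :=
  fun p q =>
    (if p.1 = q.1 then A p.1 p.2 q.2 else 0)
    + (if (p.1 : ℕ) + 1 = (q.1 : ℕ) then B p.1 p.2 q.2 else 0)
    + (if (q.1 : ℕ) + 1 = (p.1 : ℕ) then C p.1 p.2 q.2 else 0)
    + (if (p.1 : ℕ) = 0 ∧ (q.1 : ℕ) = n - 1 then z⁻¹ * C p.1 p.2 q.2 else 0)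
    + (if (p.1 : ℕ) = n - 1 ∧ (q.1 : ℕ) = 0 then z * B p.1 p.2 q.2 else 0)

theorem tstep_mulVec {m : ℕ} (A B C : Matrix (Fin m) (Fin m) ℂ) (E : ℂ) (x y : Fin m → ℂ) :
    tstep A B C E *ᵥ Sum.elim x y
      = Sum.elim ((B⁻¹ * (E • 1 - A)) *ᵥ x - (B⁻¹ * C) *ᵥ y) x := by
  rw [tstep, Matrix.fromBlocks_mulVec]
  simp [Matrix.neg_mulVec, sub_eq_add_neg]

theorem sum_ite_unique {α M : Type*} [Fintype α] [DecidableEq α] [AddCommMonoid M]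
    (c : α → Prop) [DecidablePred c] (g : α → M) (l0 : α) (h : ∀ l, c l ↔ l = l0) :
    ∑ l, (if c l then g l else 0) = g l0 := by
  rw [Finset.sum_congr rfl fun l _ => if_congr (h l) rfl rfl]
  simp

theorem sum_ite_false' {α M : Type*} [Fintype α] [AddCommMonoid M] (c : α → Prop)
    [DecidablePred c] (g : α → M) (h : ∀ l, ¬ c l) :
    ∑ l, (if c l then g l else 0) = 0 := by
  rw [Finset.sum_congr rfl fun l _ => if_neg (h l)]; simp

theorem sum_ite_const {α M : Type*} [Fintype α] [AddCommMonoid M] (c : Prop) [Decidable c]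
    (f : α → M) : ∑ b, (if c then f b else 0) = if c then ∑ b, f b else 0 := by
  split_ifs <;> simp

/-- If `u ≠ 0` satisfies `H(z) u = E u`, then `w = (u_1, z⁻¹ u_n)` is nonzero and
`T(E) w = z w`; in particular `z` is an eigenvalue of `T(E)`. -/
theorem stmt0 {n m : ℕ} (hn : 2 ≤ n) (hm : 1 ≤ m)
    (A B C : Fin n → Matrix (Fin m) (Fin m) ℂ)
    (hB : ∀ k, IsUnit (B k)) (hC : ∀ k, IsUnit (C k))
    (z : ℂ) (hz : z ≠ 0) (E : ℂ)
    (u : Fin n × Fin m → ℂ) (hu : u ≠ 0)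
    (huH : Hmat A B C z *ᵥ u = E • u) :
    ∃ w : Fin m ⊕ Fin m → ℂ,
      w = Sum.elim (fun a => u (⟨0, by omega⟩, a)) (fun a => z⁻¹ * u (⟨n - 1, by omega⟩, a)) ∧
      w ≠ 0 ∧ transfer A B C E *ᵥ w = z • w := by
  have hn0 : 0 < n := by omega
  have hn1 : n - 1 < n := by omega
  obtain ⟨v, hv0, hvmid, hvtop⟩ :
      ∃ v : ℕ → Fin m → ℂ,
        (∀ a, v 0 a = z⁻¹ * u (⟨n - 1, hn1⟩, a)) ∧
        (∀ (j : ℕ) (h : j < n) (a : Fin m), v (j + 1) a = u (⟨j, h⟩, a)) ∧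
        (∀ a, v (n + 1) a = z * u (⟨0, hn0⟩, a)) := by
    refine ⟨fun j a =>
      if hj : j = 0 then z⁻¹ * u (⟨n - 1, hn1⟩, a)
      else if h : j - 1 < n then u (⟨j - 1, h⟩, a)
      else z * u (⟨0, hn0⟩, a), fun a => by simp, fun j h a => ?_, fun a => ?_⟩
    · dsimp only
      rw [dif_neg (by omega : ¬ (j + 1 = 0)), dif_pos (by omega : j + 1 - 1 < n)]
      congr 1
    · dsimp only
      rw [dif_neg (by omega : ¬ (n + 1 = 0)), dif_neg (by omega : ¬ (n + 1 - 1 < n))]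
  -- the key row identity
  have hrow : ∀ k : Fin n,
      A k *ᵥ v (↑k + 1) + B k *ᵥ v (↑k + 2) + C k *ᵥ v ↑k = E • v (↑k + 1) := by
    intro k
    funext a
    have h := congrFun huH (k, a)
    rw [Matrix.mulVec, dotProduct, Fintype.sum_prod_type] at h
    simp only [Hmat, add_mul, ite_mul, zero_mul, Finset.sum_add_distrib, sum_ite_const] at h
    have e1 : (∑ x : Fin n, if k = x then ∑ b : Fin m, A k a b * u (x, b) else 0)
        = (A k *ᵥ v (↑k + 1)) a := by
      rw [sum_ite_unique _ _ k (fun l => eq_comm)]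
      rw [Matrix.mulVec, dotProduct]
      exact Finset.sum_congr rfl fun b _ => by rw [hvmid ↑k k.isLt b]
    have e2 : (∑ x : Fin n, if (k : ℕ) + 1 = (x : ℕ) then ∑ b : Fin m, B k a b * u (x, b) else 0)
        + (∑ x : Fin n, if (k : ℕ) = n - 1 ∧ (x : ℕ) = 0 then
            ∑ b : Fin m, z * B k a b * u (x, b) else 0)
        = (B k *ᵥ v (↑k + 2)) a := by
      by_cases hkl : (k : ℕ) = n - 1
      · rw [sum_ite_false' _ _ (fun l => by have := l.isLt; have := k.isLt; omega)]
        rw [sum_ite_unique _ _ (⟨0, hn0⟩ : Fin n)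
          (fun l => ⟨fun hl => Fin.ext hl.2, fun hl => ⟨hkl, by rw [hl]⟩⟩)]
        rw [show (k : ℕ) + 2 = n + 1 from by have := k.isLt; omega]
        rw [Matrix.mulVec, dotProduct, zero_add]
        exact Finset.sum_congr rfl fun b _ => by rw [hvtop b]; ring
      · have hlt : (k : ℕ) + 1 < n := by have := k.isLt; omega
        rw [sum_ite_unique _ _ (⟨(k : ℕ) + 1, hlt⟩ : Fin n)
          (fun l => ⟨fun hl => Fin.ext hl.symm, fun hl => by rw [hl]⟩)]
        rw [sum_ite_false' _ _ (fun l hl => hkl hl.1), add_zero]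
        rw [Matrix.mulVec, dotProduct]
        exact Finset.sum_congr rfl fun b _ => by rw [hvmid ((k : ℕ) + 1) hlt b]
    have e3 : (∑ x : Fin n, if (x : ℕ) + 1 = (k : ℕ) then ∑ b : Fin m, C k a b * u (x, b) else 0)
        + (∑ x : Fin n, if (k : ℕ) = 0 ∧ (x : ℕ) = n - 1 then
            ∑ b : Fin m, z⁻¹ * C k a b * u (x, b) else 0)
        = (C k *ᵥ v ↑k) a := by
      by_cases hk0 : (k : ℕ) = 0
      · rw [sum_ite_false' _ _ (fun l => by omega)]
        rw [sum_ite_unique _ _ (⟨n - 1, hn1⟩ : Fin n)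
          (fun l => ⟨fun hl => Fin.ext hl.2, fun hl => ⟨hk0, by rw [hl]⟩⟩)]
        rw [hk0, Matrix.mulVec, dotProduct, zero_add]
        exact Finset.sum_congr rfl fun b _ => by rw [hv0 b]; ring
      · have hlt : (k : ℕ) - 1 < n := by have := k.isLt; omega
        rw [sum_ite_unique _ _ (⟨(k : ℕ) - 1, hlt⟩ : Fin n)
          (fun l => ⟨fun hl => Fin.ext (by simp; omega), fun hl => by rw [hl]; simp; omega⟩)]
        rw [sum_ite_false' _ _ (fun l hl => hk0 hl.1), add_zero]
        rw [Matrix.mulVec, dotProduct]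
        refine Finset.sum_congr rfl fun b _ => ?_
        have hb := hvmid ((k : ℕ) - 1) hlt b
        rw [show (k : ℕ) - 1 + 1 = (k : ℕ) from by omega] at hb
        rw [hb]
    simp only [Pi.add_apply, Pi.smul_apply, smul_eq_mul] at h ⊢
    have hua : u (k, a) = v (↑k + 1) a := (hvmid ↑k k.isLt a).symm
    rw [hua] at h
    linear_combination h - e1 - e2 - e3
  have hdet : ∀ k : Fin n, IsUnit (B k).det := fun k => (Matrix.isUnit_iff_isUnit_det _).mp (hB k)
  -- the transfer-matrix step
  have hstep : ∀ (j : ℕ) (hj : j < n),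
      tstep (A ⟨j, hj⟩) (B ⟨j, hj⟩) (C ⟨j, hj⟩) E *ᵥ Sum.elim (v (j + 1)) (v j)
        = Sum.elim (v (j + 2)) (v (j + 1)) := by
    intro j hj
    set k : Fin n := ⟨j, hj⟩ with hk
    have hb : B k *ᵥ v (j + 2) = (E • 1 - A k) *ᵥ v (j + 1) - C k *ᵥ v j := by
      funext a
      have h := congrFun (hrow k) a
      simp only [Pi.add_apply, Pi.smul_apply, smul_eq_mul] at h
      rw [Matrix.sub_mulVec, Matrix.smul_mulVec, Matrix.one_mulVec]
      simp only [Pi.sub_apply, Pi.smul_apply, smul_eq_mul]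
      linear_combination h
    rw [tstep_mulVec]
    have hmain : ((B k)⁻¹ * (E • 1 - A k)) *ᵥ v (j + 1) - ((B k)⁻¹ * C k) *ᵥ v j
        = v (j + 2) := by
      calc ((B k)⁻¹ * (E • 1 - A k)) *ᵥ v (j + 1) - ((B k)⁻¹ * C k) *ᵥ v j
          = (B k)⁻¹ *ᵥ ((E • 1 - A k) *ᵥ v (j + 1) - C k *ᵥ v j) := by
            rw [Matrix.mulVec_sub, ← Matrix.mulVec_mulVec, ← Matrix.mulVec_mulVec]
        _ = (B k)⁻¹ *ᵥ (B k *ᵥ v (j + 2)) := by rw [hb]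
        _ = v (j + 2) := by
            rw [Matrix.mulVec_mulVec, Matrix.nonsing_inv_mul _ (hdet k), Matrix.one_mulVec]
    rw [hmain]
  -- partial products of the transfer matrix
  set L : List (Matrix (Fin m ⊕ Fin m) (Fin m ⊕ Fin m) ℂ) :=
    List.ofFn (fun k : Fin n => tstep (A k) (B k) (C k) E) with hLdef
  have hLlen : L.length = n := by simp [hLdef]
  have hpart : ∀ j, j ≤ n →
      (L.take j).reverse.prod *ᵥ Sum.elim (v 1) (v 0) = Sum.elim (v (j + 1)) (v j) := by
    intro j
    induction j with
    | zero => intro _; simp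
    | succ j ih =>
      intro hj
      have hj' : j < n := by omega
      have hgl : L[j]? = some (tstep (A ⟨j, hj'⟩) (B ⟨j, hj'⟩) (C ⟨j, hj'⟩) E) := by
        rw [List.getElem?_eq_getElem (by omega)]
        simp [hLdef]
      rw [List.take_succ, hgl]
      rw [show (some (tstep (A ⟨j, hj'⟩) (B ⟨j, hj'⟩) (C ⟨j, hj'⟩) E)).toList
          = [tstep (A ⟨j, hj'⟩) (B ⟨j, hj'⟩) (C ⟨j, hj'⟩) E] from rfl]
      rw [List.reverse_append]
      rw [show ([tstep (A ⟨j, hj'⟩) (B ⟨j, hj'⟩) (C ⟨j, hj'⟩) E]).reverse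
          = [tstep (A ⟨j, hj'⟩) (B ⟨j, hj'⟩) (C ⟨j, hj'⟩) E] from rfl]
      rw [List.singleton_append, List.prod_cons, ← Matrix.mulVec_mulVec]
      rw [ih (by omega)]
      exact hstep j hj'
  have hv1 : ∀ a, v 1 a = u (⟨0, hn0⟩, a) := fun a => hvmid 0 hn0 a
  have hvn : ∀ a, v n a = u (⟨n - 1, hn1⟩, a) := fun a => by
    have h := hvmid (n - 1) hn1 a
    rwa [show n - 1 + 1 = n from by omega] at h
  refine ⟨Sum.elim (v 1) (v 0), ?_, ?_, ?_⟩
  · funext x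
    cases x with
    | inl a => simpa using hv1 a
    | inr a => simpa using hv0 a
  · intro hw
    have h1 : ∀ a, v 1 a = 0 := fun a => by simpa using congrFun hw (Sum.inl a)
    have h0 : ∀ a, v 0 a = 0 := fun a => by simpa using congrFun hw (Sum.inr a)
    have hall : ∀ j, j + 1 ≤ n + 1 → (v j = 0 ∧ v (j + 1) = 0) := by
      intro j
      induction j with
      | zero => intro _; exact ⟨funext h0, funext h1⟩
      | succ j ih =>
        intro hj
        obtain ⟨ha, hb⟩ := ih (by omega)
        refine ⟨hb, ?_⟩
        have hj' : j < n := by omega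
        have hs := hstep j hj'
        rw [tstep_mulVec, ha, hb] at hs
        funext a
        have h2 := congrFun hs (Sum.inl a)
        simp only [Sum.elim_inl] at h2
        rw [← h2]
        simp
    have hu0 : u = 0 := by
      funext p
      obtain ⟨k, a⟩ := p
      have hk := (hall ↑k (by have := k.isLt; omega)).2
      have h3 : v (↑k + 1) a = 0 := congrFun hk a
      rw [hvmid ↑k k.isLt a] at h3
      exact h3
    exact hu hu0
  · have htake : L.take n = L := by rw [← hLlen]; exact List.take_length
    have htr : transfer A B C E = (L.take n).reverse.prod := by rw [htake]; rfl
    rw [htr, hpart n le_rfl]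
    funext x
    cases x with
    | inl a =>
      simp only [Sum.elim_inl, Pi.smul_apply, smul_eq_mul]
      rw [hvtop a, hv1 a]
    | inr a =>
      simp only [Sum.elim_inr, Pi.smul_apply, smul_eq_mul]
      rw [hvn a, hv0 a, ← mul_assoc, mul_inv_cancel₀ hz, one_mul]
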